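/- Let $(C,D)$ be an inclusion and let $\rho$ be a $D$-compatible state on $C$. Then: (1) for every normalizer $v \in N(C,D)$ with $\rho(v) \neq 0$ and every $x \in C$, $\rho(vx) = \rho(v)\rho(x) = \rho(xv)$; (2) the restriction of $\rho$ to $D$ is multiplicative, i.e., $\rho(d_1 d_2) = \rho(d_1)\rho(d_2)$ for all $d_1, d_2 \in D$; (3) for every $v \in N(C,D)$ with $\rho(v) \neq 0$ and every $x \in C$, $\rho(v^* x v) = \rho(v^*v)\rho(x)$. -/

import Mathlib

open scoped ComplexOrder

/-- `v` is a normalizer of the subset `S`:  `v* S v ⊆ S` and `v S v* ⊆ S`. -/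
def IsNormalizer {C : Type*} [Mul C] [Star C] (S : Set C) (v : C) : Prop :=
  ∀ d ∈ S, star v * d * v ∈ S ∧ v * d * star v ∈ S

set_option maxHeartbeats 1000000

/-- Let `(C,D)` be an inclusion and `ρ` a `D`-compatible state on `C`.  Then:
(1) `ρ(vx) = ρ(v)ρ(x) = ρ(xv)` for every normalizer `v` with `ρ(v) ≠ 0` and every `x`;
(2) `ρ|_D` is multiplicative;
(3) `ρ(v* x v) = ρ(v*v) ρ(x)` for every normalizer `v` with `ρ(v) ≠ 0` and every `x`. -/
theorem compatible_state_properties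
    {C : Type*} [NormedRing C] [StarRing C] [CStarRing C] [NormedAlgebra ℂ C]
    [CompleteSpace C] [StarModule ℂ C]
    (D : StarSubalgebra ℂ C) (hDclosed : IsClosed (D : Set C))
    (hDcomm : ∀ a ∈ D, ∀ b ∈ D, a * b = b * a)
    -- `ρ` is a state on `C`
    (ρ : C →ₗ[ℂ] ℂ) (hρ1 : ρ 1 = 1) (hρpos : ∀ x : C, 0 ≤ ρ (star x * x))
    -- `ρ` is `D`-compatible
    (hcompat : ∀ v : C, IsNormalizer (D : Set C) v →
      (((‖ρ v‖ : ℝ) : ℂ) ^ 2 = 0 ∨ ((‖ρ v‖ : ℝ) : ℂ) ^ 2 = ρ (star v * v))) :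
    (∀ v : C, IsNormalizer (D : Set C) v → ρ v ≠ 0 →
      ∀ x : C, ρ (v * x) = ρ v * ρ x ∧ ρ (x * v) = ρ x * ρ v) ∧
    (∀ d₁ ∈ D, ∀ d₂ ∈ D, ρ (d₁ * d₂) = ρ d₁ * ρ d₂) ∧
    (∀ v : C, IsNormalizer (D : Set C) v → ρ v ≠ 0 →
      ∀ x : C, ρ (star v * x * v) = ρ (star v * v) * ρ x) := by
  classical
  have him : ∀ x : C, (ρ (star x * x)).im = 0 := by
    intro x
    have h := hρpos x
    simpa using (Complex.le_def.mp h).2.symm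
  have hre : ∀ x : C, 0 ≤ (ρ (star x * x)).re := by
    intro x
    have h := hρpos x
    simpa using (Complex.le_def.mp h).1
  -- ρ is hermitian
  have herm : ∀ x : C, ρ (star x) = starRingEnd ℂ (ρ x) := by
    intro x
    have e1 : star (1 + x) * (1 + x) = 1 + x + star x + star x * x := by
      rw [star_add, star_one]; noncomm_ring
    have p1 := him (1 + x)
    rw [e1, map_add, map_add, map_add, hρ1] at p1
    simp only [Complex.add_im, Complex.one_im, him x, add_zero, zero_add] at p1
    have e2 : star (1 + Complex.I • x) * (1 + Complex.I • x)
        = 1 + Complex.I • x + (-Complex.I) • star x + star x * x := by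
      rw [star_add, star_one, star_smul, Complex.star_def, Complex.conj_I]
      simp only [add_mul, mul_add, one_mul, mul_one, smul_mul_assoc, mul_smul_comm,
        smul_smul]
      match_scalars <;> simp [Complex.I_sq]
    have p2 := him (1 + Complex.I • x)
    rw [e2, map_add, map_add, map_add, hρ1, map_smul, map_smul] at p2
    simp only [Complex.add_im, Complex.one_im, him x, add_zero, zero_add, smul_eq_mul,
      Complex.mul_im, Complex.I_re, Complex.I_im, Complex.neg_re, Complex.neg_im,
      zero_mul, one_mul, neg_mul, neg_zero, mul_one, zero_add, neg_neg] at p2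
    apply Complex.ext
    · rw [Complex.conj_re]; linarith
    · rw [Complex.conj_im]; linarith
  -- if ρ(b* b) = 0 then ρ(a b) = 0 for all a
  have hzero : ∀ b : C, ρ (star b * b) = 0 → ∀ a : C, ρ (a * b) = 0 := by
    intro b hb a
    by_contra hz
    set z := ρ (a * b) with hzdef
    set s : ℝ := ((ρ (a * star a)).re + 1) / (2 * Complex.normSq z) with hs
    set t : ℂ := -(s : ℂ) * starRingEnd ℂ z with ht
    have e : star (star a + t • b) * (star a + t • b)
        = a * star a + t • (a * b) + (starRingEnd ℂ t) • (star b * star a)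
          + (starRingEnd ℂ t * t) • (star b * b) := by
      rw [star_add, star_smul, star_star, Complex.star_def]
      simp only [add_mul, mul_add, smul_mul_assoc, mul_smul_comm, smul_smul]
      module
    have hsab : star b * star a = star (a * b) := (star_mul a b).symm
    have hval : ρ (star (star a + t • b) * (star a + t • b))
        = ρ (a * star a) - ((2 * s * Complex.normSq z : ℝ) : ℂ) := by
      rw [e, map_add, map_add, map_add, map_smul, map_smul, map_smul, hb, hsab, herm,
        ← hzdef, ht]
      simp only [smul_eq_mul, mul_zero, add_zero, map_mul, map_neg, Complex.conj_ofReal,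
        Complex.conj_conj]
      have h1 : z * starRingEnd ℂ z = (Complex.normSq z : ℂ) := Complex.mul_conj z
      push_cast
      linear_combination (-(2 : ℂ) * s) * h1
    have hpos := hρpos (star a + t • b)
    rw [hval] at hpos
    have hie := (Complex.le_def.mp hpos).1
    simp only [Complex.zero_re, Complex.sub_re, Complex.ofReal_re] at hie
    have hnz : 0 < Complex.normSq z := by
      simpa [Complex.normSq_pos] using hz
    have hsval : 2 * s * Complex.normSq z = (ρ (a * star a)).re + 1 := by
      rw [hs]
      field_simp
    rw [hsval] at hie
    linarith
  -- normalizers are closed under star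
  have hstarnorm : ∀ v : C, IsNormalizer (D : Set C) v → IsNormalizer (D : Set C) (star v) := by
    intro v hv d hd
    obtain ⟨h1, h2⟩ := hv d hd
    rw [star_star]
    exact ⟨h2, h1⟩
  have hstar0 : ∀ v : C, ρ v ≠ 0 → ρ (star v) ≠ 0 := by
    intro v hv
    rw [herm]
    simpa using hv
  -- forced equality from compatibility
  have hforced : ∀ v : C, IsNormalizer (D : Set C) v → ρ v ≠ 0 →
      ρ (star v * v) = ρ v * starRingEnd ℂ (ρ v) := by
    intro v hv hv0
    have habs : (((‖ρ v‖ : ℝ) : ℂ)) ^ 2 = ρ v * starRingEnd ℂ (ρ v) := by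
      rw [← Complex.ofReal_pow, Complex.sq_norm, Complex.mul_conj]
    rcases hcompat v hv with h | h
    · exfalso
      apply hv0
      have h' : (((‖ρ v‖ : ℝ)) : ℂ) = 0 := by
        exact (pow_eq_zero_iff two_ne_zero).mp h
      have : ‖ρ v‖ = 0 := by exact_mod_cast h'
      exact norm_eq_zero.mp this
    · rw [← h, habs]
  -- main multiplicativity lemma
  have hmul : ∀ v : C, IsNormalizer (D : Set C) v → ρ v ≠ 0 →
      ∀ x : C, ρ (v * x) = ρ v * ρ x ∧ ρ (x * v) = ρ x * ρ v := by
    intro v hv hv0 x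
    set w : C := v - ρ v • 1 with hw
    have hw1 : ρ (star w * w) = 0 := by
      have e : star w * w = star v * v - (ρ v) • star v - (starRingEnd ℂ (ρ v)) • v
          + (starRingEnd ℂ (ρ v) * ρ v) • 1 := by
        rw [hw, star_sub, star_smul, star_one, Complex.star_def]
        simp only [sub_mul, mul_sub, smul_mul_assoc, mul_smul_comm, smul_smul, mul_one, one_mul]
        module
      rw [e, map_add, map_sub, map_sub, map_smul, map_smul, map_smul, hρ1, herm,
        hforced v hv hv0]
      simp only [smul_eq_mul, mul_one]
      ring
    have hw2 : ρ (w * star w) = 0 := by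
      have e : w * star w = v * star v - (starRingEnd ℂ (ρ v)) • v - (ρ v) • star v
          + (ρ v * starRingEnd ℂ (ρ v)) • 1 := by
        rw [hw, star_sub, star_smul, star_one, Complex.star_def]
        simp only [sub_mul, mul_sub, smul_mul_assoc, mul_smul_comm, smul_smul, mul_one, one_mul]
        module
      have hf := hforced (star v) (hstarnorm v hv) (hstar0 v hv0)
      rw [star_star, herm, Complex.conj_conj] at hf
      rw [e, map_add, map_sub, map_sub, map_smul, map_smul, map_smul, hρ1, herm, hf]
      simp only [smul_eq_mul, mul_one]
      ring
    have hxw : ρ (x * w) = 0 := hzero w hw1 x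
    have hwx : ρ (w * x) = 0 := by
      have h1 : ρ (star x * star w) = 0 := by
        apply hzero (star w) _ (star x)
        rw [star_star]
        exact hw2
      have h2 : ρ (star (w * x)) = 0 := by rw [star_mul]; exact h1
      rw [herm] at h2
      simpa using h2
    constructor
    · have : v * x = w * x + ρ v • x := by rw [hw]; simp [sub_mul, smul_mul_assoc]
      rw [this, map_add, map_smul, hwx, zero_add, smul_eq_mul]
    · have : x * v = x * w + ρ v • x := by rw [hw]; simp [mul_sub, mul_smul_comm]
      rw [this, map_add, map_smul, hxw, zero_add, smul_eq_mul]
      ring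
  -- elements of D are normalizers
  have hDnorm : ∀ d ∈ D, IsNormalizer (D : Set C) d := by
    intro d hd d' hd'
    exact ⟨mul_mem (mul_mem (star_mem hd) hd') hd, mul_mem (mul_mem hd hd') (star_mem hd)⟩
  refine ⟨fun v hv hv0 x => hmul v hv hv0 x, ?_, ?_⟩
  · intro d₁ h₁ d₂ h₂
    by_cases h : ρ d₁ = 0
    · have hn : IsNormalizer (D : Set C) (d₁ + 1) := hDnorm _ (add_mem h₁ (one_mem _))
      have h0 : ρ (d₁ + 1) ≠ 0 := by
        rw [map_add, hρ1, h, zero_add]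
        exact one_ne_zero
      have hm := (hmul _ hn h0 d₂).1
      rw [add_mul, one_mul, map_add, map_add, hρ1, h, zero_add, one_mul] at hm
      rw [h, zero_mul]
      linear_combination hm
    · exact (hmul d₁ (hDnorm d₁ h₁) h d₂).1
  · intro v hv hv0 x
    have hsn := hstarnorm v hv
    have hs0 := hstar0 v hv0
    calc ρ (star v * x * v) = ρ (star v * (x * v)) := by rw [mul_assoc]
      _ = ρ (star v) * ρ (x * v) := (hmul _ hsn hs0 _).1
      _ = starRingEnd ℂ (ρ v) * (ρ x * ρ v) := by rw [herm, (hmul v hv hv0 x).2]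
      _ = (ρ v * starRingEnd ℂ (ρ v)) * ρ x := by ring
      _ = ρ (star v * v) * ρ x := by rw [hforced v hv hv0]
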